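/- Let G=(V,E) be a connected simple graph with n = |V| vertices. Define the digraph G' on vertex set V ∪ {v_e : e ∈ E} whose arcs are (u, v_e) for every edge e ∈ E and every endpoint u of e; set weights w(u) = 1 for u ∈ V and w(v_e) = n+1 for e ∈ E, and budget B = n. Then the minimum of w(S) over all sets S ⊆ V ∪ {v_e : e ∈ E} that satisfy the weak digraph constraint and the budget constraint and that are maximal (no strict superset satisfies the weak digraph and budget constraints) equals the independent domination number i(G) of G. -/

import Mathlib

open scoped Classical

/-- Weak digraph constraint for a digraph given by an arc relation: every vertex whose
in-neighborhood is nonempty and contained in `S` belongs to `S`. -/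
def WeakDigraphConstraintRel {α : Type*} (R : α → α → Prop) (S : Finset α) : Prop :=
  ∀ x : α, (∃ u : α, R u x) → (∀ u : α, R u x → u ∈ S) → x ∈ S

/-- The arcs of the digraph `G'` built from a simple graph `G`: an arc from each
vertex `u` to the vertex `v_e` of each edge `e` incident to `u`. -/
def redArc {V : Type*} (G : SimpleGraph V) :
    (V ⊕ G.edgeSet) → (V ⊕ G.edgeSet) → Prop :=
  fun a b => ∃ (u : V) (e : G.edgeSet),
    a = Sum.inl u ∧ b = Sum.inr e ∧ u ∈ (e : Sym2 V)

/-- The weights of `G'`: `1` on original vertices and `n + 1` on edge vertices. -/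
def redW {V : Type*} (G : SimpleGraph V) (n : ℕ) : (V ⊕ G.edgeSet) → ℕ :=
  Sum.elim (fun _ => 1) (fun _ => n + 1)

lemma sum_redW_image {V : Type*} [Fintype V] [DecidableEq V] (G : SimpleGraph V)
    (A : Finset V) :
    (∑ x ∈ A.image Sum.inl, redW G (Fintype.card V) x) = A.card := by
  rw [Finset.sum_image (fun a _ b _ h => Sum.inl_injective h)]
  simp [redW]

/-- If `S` is the image of an independent set, the weak digraph constraint holds. -/
lemma weak_of_indep {V : Type*} [DecidableEq V] (G : SimpleGraph V) (A : Finset V)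
    (hind : ∀ u ∈ A, ∀ v ∈ A, ¬ G.Adj u v) :
    WeakDigraphConstraintRel (redArc G) (A.image Sum.inl) := by
  rintro x ⟨u0, w, e, rfl, rfl, hw⟩ hall
  rcases e with ⟨s, hs⟩
  induction s using Sym2.ind with
  | _ a b =>
    have hadj : G.Adj a b := hs
    have ha : Sum.inl a ∈ A.image Sum.inl :=
      hall (Sum.inl a) ⟨a, ⟨s(a, b), hs⟩, rfl, rfl, by simp⟩
    have hb : Sum.inl b ∈ A.image Sum.inl :=
      hall (Sum.inl b) ⟨b, ⟨s(a, b), hs⟩, rfl, rfl, by simp⟩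
    have haA : a ∈ A := by simpa using ha
    have hbA : b ∈ A := by simpa using hb
    exact absurd hadj (hind a haA b hbA)

/-- A set satisfying the weak constraint with no edge-vertex has independent vertex part. -/
lemma indep_of_weak {V : Type*} (G : SimpleGraph V) (S : Finset (V ⊕ G.edgeSet))
    (hweak : WeakDigraphConstraintRel (redArc G) S)
    (hnoinr : ∀ e : G.edgeSet, Sum.inr e ∉ S) :
    ∀ u w : V, Sum.inl u ∈ S → Sum.inl w ∈ S → ¬ G.Adj u w := by
  intro u w hu hw hadj
  have he : s(u, w) ∈ G.edgeSet := hadj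
  have : Sum.inr (⟨s(u, w), he⟩ : G.edgeSet) ∈ S := by
    apply hweak
    · exact ⟨Sum.inl u, u, ⟨s(u, w), he⟩, rfl, rfl, by simp⟩
    · rintro a ⟨z, f, rfl, hf, hz⟩
      have hf' : f = ⟨s(u, w), he⟩ := (Sum.inr_injective hf).symm
      subst hf'
      have hz' : z ∈ s(u, w) := hz
      rcases Sym2.mem_iff.mp hz' with rfl | rfl
      · exact hu
      · exact hw
  exact hnoinr _ this

theorem maximal_ssgw_value_eq_independent_domination_number
    {V : Type*} [Fintype V] [DecidableEq V]
    (G : SimpleGraph V) (hconn : G.Connected) :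
    -- the optimal value of Maximal SSGW on `(G', w, B = n)` ...
    sInf {m : ℕ | ∃ S : Finset (V ⊕ G.edgeSet),
        WeakDigraphConstraintRel (redArc G) S ∧
        (∑ x ∈ S, redW G (Fintype.card V) x) ≤ Fintype.card V ∧
        (¬ ∃ T : Finset (V ⊕ G.edgeSet), S ⊂ T ∧
            WeakDigraphConstraintRel (redArc G) T ∧
            (∑ x ∈ T, redW G (Fintype.card V) x) ≤ Fintype.card V) ∧
        (∑ x ∈ S, redW G (Fintype.card V) x) = m}
    -- ... equals the independent domination number `i(G)`
    = sInf {m : ℕ | ∃ S : Finset V,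
        (∀ u ∈ S, ∀ v ∈ S, ¬ G.Adj u v) ∧
        (∀ v : V, v ∉ S → ∃ u ∈ S, G.Adj u v) ∧
        S.card = m} := by
  have hcard : ∀ (S : Finset (V ⊕ G.edgeSet)),
      (∑ x ∈ S, redW G (Fintype.card V) x) ≤ Fintype.card V →
      ∀ e : G.edgeSet, Sum.inr e ∉ S := by
    intro S hbud e he
    have h1 : Fintype.card V + 1 ≤ ∑ x ∈ S, redW G (Fintype.card V) x :=
      Finset.single_le_sum (fun (x : V ⊕ G.edgeSet) _ => Nat.zero_le (redW G (Fintype.card V) x)) he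
    omega
  congr 1
  ext m
  simp only [Set.mem_setOf_eq]
  constructor
  · rintro ⟨S, hweak, hbud, hmax, rfl⟩
    set A : Finset V := S.preimage Sum.inl Sum.inl_injective.injOn with hAdef
    have hmemA : ∀ u : V, u ∈ A ↔ Sum.inl u ∈ S := fun u => Finset.mem_preimage
    have hS : S = A.image Sum.inl := by
      ext x
      cases x with
      | inl u => simp [hmemA]
      | inr e => simp [hcard S hbud e]
    have hind : ∀ u ∈ A, ∀ v ∈ A, ¬ G.Adj u v := by
      intro u hu v hv hadj
      exact indep_of_weak G S hweak (hcard S hbud) u v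
        ((hmemA u).mp hu) ((hmemA v).mp hv) hadj
    have hdom : ∀ v : V, v ∉ A → ∃ u ∈ A, G.Adj u v := by
      intro v hv
      by_contra hcon
      push_neg at hcon
      have hind' : ∀ u ∈ insert v A, ∀ w ∈ insert v A, ¬ G.Adj u w := by
        intro u hu w hw hadj
        rcases Finset.mem_insert.mp hu with h1 | h1 <;>
          rcases Finset.mem_insert.mp hw with h2 | h2
        · subst h1; subst h2; exact G.loopless.irrefl _ hadj
        · subst h1; exact hcon w h2 hadj.symm
        · subst h2; exact hcon u h1 hadj
        · exact hind u h1 w h2 hadj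
      apply hmax
      refine ⟨(insert v A).image Sum.inl, ?_, weak_of_indep G _ hind', ?_⟩
      · rw [hS, Finset.ssubset_def]
        refine ⟨Finset.image_subset_image (Finset.subset_insert v A), fun hsub => ?_⟩
        have h1 : Sum.inl v ∈ A.image Sum.inl :=
          hsub (Finset.mem_image_of_mem _ (Finset.mem_insert_self v A))
        have h2 : v ∈ A := by simpa using h1
        exact hv h2
      · rw [sum_redW_image]
        exact Finset.card_le_univ _
    refine ⟨A, hind, hdom, ?_⟩
    rw [hS, sum_redW_image]
  · rintro ⟨A, hind, hdom, rfl⟩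
    refine ⟨A.image Sum.inl, weak_of_indep G A hind, ?_, ?_, sum_redW_image G A⟩
    · rw [sum_redW_image]
      exact Finset.card_le_univ A
    · rintro ⟨T, hST, hTweak, hTbud⟩
      have hnoinr := hcard T hTbud
      have hindT := indep_of_weak G T hTweak hnoinr
      obtain ⟨x, hxT, hxS⟩ := Finset.exists_of_ssubset hST
      cases x with
      | inl u =>
        have huA : u ∉ A := by
          intro h
          exact hxS (Finset.mem_image_of_mem _ h)
        obtain ⟨w, hwA, hadj⟩ := hdom u huA
        have hwT : Sum.inl w ∈ T := hST.1 (Finset.mem_image_of_mem _ hwA)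
        exact hindT w u hwT hxT hadj
      | inr e => exact hnoinr e hxT
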